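/- Let (X, B, μ) be a probability space, ε > 0, and let H_ε be a set of measurable functions X → {0,1} such that μ({x : g(x) ≠ h(x)}) ≥ ε for all distinct g, h ∈ H_ε. Let π be a probability measure on (H_ε, 2^{H_ε}) vanishing on singletons. Then for every countable set H of measurable functions X → {0,1}, π({ h' ∈ H_ε : inf_{h ∈ H} μ({x : h(x) ≠ h'(x)}) > ε/2 }) = 1. -/

import Mathlib

open MeasureTheory
open scoped ENNReal

universe u

/-- A probability measure defined on *all* subsets of `X`: a countably additive
function `m : 2^X → [0,1]` with `m ∅ = 0` and `m X = 1`. -/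
structure TotalMeasure (X : Type u) : Type u where
  m : Set X → ℝ≥0∞
  m_empty : m ∅ = 0
  m_univ : m Set.univ = 1
  m_iUnion : ∀ A : ℕ → Set X, Pairwise (Function.onFun Disjoint A) →
    m (⋃ i, A i) = ∑' i, m (A i)

namespace TotalMeasure

noncomputable def toMeasure {Y : Type u} (π : TotalMeasure Y) : @Measure Y ⊤ :=
  @Measure.ofMeasurable Y ⊤ (fun s _ => π.m s) π.m_empty
    (fun A _ hd => π.m_iUnion A hd)

lemma toMeasure_apply {Y : Type u} (π : TotalMeasure Y) (s : Set Y) :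
    π.toMeasure s = π.m s :=
  @Measure.ofMeasurable_apply Y ⊤ _ _ _ s MeasurableSpace.measurableSet_top

end TotalMeasure

set_option maxHeartbeats 1000000

/-- Let `(X, B, μ)` be a probability space, `ε > 0`, and `H_ε` an `ε`-separated family
of measurable classifiers. If `π` is a probability measure on all subsets of `H_ε`
vanishing on singletons, then for every countable set `H` of measurable classifiers,
`π`-almost every `h' ∈ H_ε` has `inf_{h ∈ H} μ({h ≠ h'}) > ε/2`. -/
theorem pi_full_measure_far_from_countable {X : Type u} [MeasurableSpace X]
    (μ : Measure X) [IsProbabilityMeasure μ]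
    (ε : ℝ) (hε : 0 < ε) (Hε : Set (X → Bool))
    (hHmeas : ∀ g ∈ Hε, Measurable g)
    (hsep : ∀ g ∈ Hε, ∀ h ∈ Hε, g ≠ h → ENNReal.ofReal ε ≤ μ {x | g x ≠ h x})
    (π : TotalMeasure Hε) (hπ : ∀ h : Hε, π.m {h} = 0) :
    ∀ H : Set (X → Bool), H.Countable → (∀ h ∈ H, Measurable h) →
      π.m {h' : Hε | ENNReal.ofReal (ε / 2) <
        ⨅ h : H, μ {x | (h : X → Bool) x ≠ (h' : X → Bool) x}} = 1 := by
  intro H hHcnt hHm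
  classical
  set n : ℕ := ⌈4 / ε⌉₊ + 1 with hn
  have hnpos : 0 < (n : ℝ) := by positivity
  set δ : ℝ := min (ε / 4) (1 / (2 * (n : ℝ) * ((n : ℝ) + 1))) with hδdef
  have hδpos : 0 < δ := lt_min (by linarith) (by positivity)
  have hδε4 : δ ≤ ε / 4 := min_le_left _ _
  have hδn : δ ≤ 1 / (2 * (n : ℝ) * ((n : ℝ) + 1)) := min_le_right _ _
  haveI : NoAtoms π.toMeasure := ⟨fun y => by rw [π.toMeasure_apply]; exact hπ y⟩
  -- finiteness of balls
  have hBfin : ∀ h : X → Bool, Measurable h →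
      {h' : Hε | μ {x | h x ≠ (h' : X → Bool) x} ≤ ENNReal.ofReal (ε / 2 + δ)}.Finite := by
    intro h hm
    by_contra hinf
    have hinf : {h' : Hε | μ {x | h x ≠ (h' : X → Bool) x} ≤ ENNReal.ofReal (ε / 2 + δ)}.Infinite := hinf
    set e := hinf.natEmbedding with he
    set f : ℕ → Hε := fun k => (e k : Hε) with hf
    have hfmem : ∀ k, μ {x | h x ≠ (f k : X → Bool) x} ≤ ENNReal.ofReal (ε / 2 + δ) :=
      fun k => (e k).2
    have hfinj : Function.Injective f := fun a b hab => e.injective (Subtype.ext hab)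
    set T : ℕ → Set X := fun k => {x | h x ≠ (f k : X → Bool) x} with hT
    have hTmeas : ∀ k, MeasurableSet (T k) :=
      fun k => (measurableSet_eq_fun hm (hHmeas _ (f k).2)).compl
    have hTub : ∀ k, μ (T k) ≤ ENNReal.ofReal (ε / 2 + δ) := hfmem
    have hfsep : ∀ k l, k ≠ l →
        ENNReal.ofReal ε ≤ μ {x | (f k : X → Bool) x ≠ (f l : X → Bool) x} := by
      intro k l hkl
      exact hsep _ (f k).2 _ (f l).2
        (fun hc => hkl (hfinj (Subtype.ext hc)))
    have hsubTT : ∀ k l, {x | (f k : X → Bool) x ≠ (f l : X → Bool) x} ⊆ T k ∪ T l := by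
      intro k l x hx
      by_contra hc
      simp only [T, Set.mem_union, Set.mem_setOf_eq, not_or, not_not] at hc
      exact hx (hc.1 ▸ hc.2 ▸ rfl)
    -- intersection bound
    have hInt : ∀ k l, k ≠ l → μ (T k ∩ T l) ≤ ENNReal.ofReal δ := by
      intro k l hkl
      have h1 : μ (T k ∪ T l) + μ (T k ∩ T l) = μ (T k) + μ (T l) :=
        measure_union_add_inter _ (hTmeas l)
      have hdisj : Disjoint {x | (f k : X → Bool) x ≠ (f l : X → Bool) x} (T k ∩ T l) := by
        rw [Set.disjoint_left]
        rintro x hx ⟨hxk, hxl⟩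
        simp only [T, Set.mem_setOf_eq] at hx hxk hxl
        have e1 : h x = !((f k : X → Bool) x) := Bool.eq_not_of_ne hxk
        have e2 : h x = !((f l : X → Bool) x) := Bool.eq_not_of_ne hxl
        exact hx (Bool.not_inj (e1 ▸ e2))
      have h2 : ENNReal.ofReal ε + μ (T k ∩ T l) ≤ μ (T k ∪ T l) := by
        calc ENNReal.ofReal ε + μ (T k ∩ T l)
            ≤ μ {x | (f k : X → Bool) x ≠ (f l : X → Bool) x} + μ (T k ∩ T l) :=
              add_le_add_left (hfsep k l hkl) _
          _ = μ ({x | (f k : X → Bool) x ≠ (f l : X → Bool) x} ∪ (T k ∩ T l)) :=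
              (measure_union hdisj ((hTmeas k).inter (hTmeas l))).symm
          _ ≤ μ (T k ∪ T l) := measure_mono
              (Set.union_subset (hsubTT k l) (Set.inter_subset_left.trans Set.subset_union_left))
      have h3 : ENNReal.ofReal ε + (μ (T k ∩ T l) + μ (T k ∩ T l)) ≤
          ENNReal.ofReal ε + (ENNReal.ofReal δ + ENNReal.ofReal δ) := by
        have hA : ENNReal.ofReal ε + (μ (T k ∩ T l) + μ (T k ∩ T l)) ≤ μ (T k) + μ (T l) := by
          rw [← h1]
          calc ENNReal.ofReal ε + (μ (T k ∩ T l) + μ (T k ∩ T l))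
              = (ENNReal.ofReal ε + μ (T k ∩ T l)) + μ (T k ∩ T l) := by ring
            _ ≤ μ (T k ∪ T l) + μ (T k ∩ T l) := add_le_add_left h2 _
        have hB : μ (T k) + μ (T l) ≤ ENNReal.ofReal ε + (ENNReal.ofReal δ + ENNReal.ofReal δ) := by
          calc μ (T k) + μ (T l) ≤ ENNReal.ofReal (ε / 2 + δ) + ENNReal.ofReal (ε / 2 + δ) :=
                add_le_add (hTub k) (hTub l)
            _ = ENNReal.ofReal ((ε / 2 + δ) + (ε / 2 + δ)) :=
                (ENNReal.ofReal_add (by linarith) (by linarith)).symm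
            _ = ENNReal.ofReal (ε + (δ + δ)) := by ring_nf
            _ = ENNReal.ofReal ε + (ENNReal.ofReal δ + ENNReal.ofReal δ) := by
                rw [ENNReal.ofReal_add hε.le (by linarith), ENNReal.ofReal_add hδpos.le hδpos.le]
        exact hA.trans hB
      have h4 : μ (T k ∩ T l) + μ (T k ∩ T l) ≤ ENNReal.ofReal δ + ENNReal.ofReal δ :=
        (ENNReal.add_le_add_iff_left ENNReal.ofReal_ne_top).mp h3
      have h5 : (2 : ℝ≥0∞) * μ (T k ∩ T l) ≤ 2 * ENNReal.ofReal δ := by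
        rw [two_mul, two_mul]; exact h4
      exact (ENNReal.mul_le_mul_iff_right (by norm_num) (by norm_num)).mp h5
    -- lower bound
    have hLow : ∀ k, ENNReal.ofReal (ε / 2 - δ) ≤ μ (T k) := by
      intro k
      have h2 : ENNReal.ofReal ε ≤ μ (T k) + ENNReal.ofReal (ε / 2 + δ) := by
        calc ENNReal.ofReal ε ≤ μ {x | (f k : X → Bool) x ≠ (f (k + 1) : X → Bool) x} :=
              hfsep k (k + 1) (by omega)
          _ ≤ μ (T k ∪ T (k + 1)) := measure_mono (hsubTT k (k + 1))
          _ ≤ μ (T k) + μ (T (k + 1)) := measure_union_le _ _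
          _ ≤ μ (T k) + ENNReal.ofReal (ε / 2 + δ) := add_le_add_right (hTub _) _
      have h3 : ENNReal.ofReal (ε / 2 - δ) + ENNReal.ofReal (ε / 2 + δ) ≤
          μ (T k) + ENNReal.ofReal (ε / 2 + δ) := by
        refine le_trans (le_of_eq ?_) h2
        rw [← ENNReal.ofReal_add (by linarith) (by linarith)]
        ring_nf
      exact (ENNReal.add_le_add_iff_right ENNReal.ofReal_ne_top).mp h3
    -- disjointification
    set D : ℕ → Set X := fun k => T k \ ⋃ j ∈ Finset.range k, T j with hD
    have hDmeas : ∀ k, MeasurableSet (D k) :=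
      fun k => (hTmeas k).diff
        (MeasurableSet.biUnion (Finset.range k).countable_toSet (fun j _ => hTmeas j))
    have hDkey : ∀ a b : ℕ, a < b → Disjoint (D a) (D b) := by
      intro a b hab
      rw [Set.disjoint_left]
      intro x hxa hxb
      exact hxb.2 (Set.mem_biUnion (Finset.mem_range.mpr hab) hxa.1)
    have hDdisj : (↑(Finset.range n) : Set ℕ).PairwiseDisjoint D := by
      intro a _ b _ hab
      rcases hab.lt_or_gt with hlt | hlt
      · exact hDkey a b hlt
      · exact (hDkey b a hlt).symm
    have hTD : ∀ k ∈ Finset.range n,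
        μ (T k) ≤ μ (D k) + (n : ℝ≥0∞) * ENNReal.ofReal δ := by
      intro k hk
      have hsub : T k ⊆ D k ∪ ⋃ j ∈ Finset.range k, (T k ∩ T j) := by
        intro x hx
        by_cases hx2 : x ∈ ⋃ j ∈ Finset.range k, T j
        · right
          simp only [Set.mem_iUnion] at hx2 ⊢
          obtain ⟨j, hj, hxj⟩ := hx2
          exact ⟨j, hj, hx, hxj⟩
        · exact Or.inl ⟨hx, hx2⟩
      calc μ (T k) ≤ μ (D k ∪ ⋃ j ∈ Finset.range k, (T k ∩ T j)) := measure_mono hsub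
        _ ≤ μ (D k) + μ (⋃ j ∈ Finset.range k, (T k ∩ T j)) := measure_union_le _ _
        _ ≤ μ (D k) + ∑ j ∈ Finset.range k, μ (T k ∩ T j) :=
            add_le_add_right (measure_biUnion_finset_le _ _) _
        _ ≤ μ (D k) + ∑ j ∈ Finset.range k, ENNReal.ofReal δ := by
            gcongr with j hj
            exact hInt k j (by have := Finset.mem_range.mp hj; omega)
        _ = μ (D k) + (k : ℝ≥0∞) * ENNReal.ofReal δ := by
            rw [Finset.sum_const, Finset.card_range, nsmul_eq_mul]
        _ ≤ μ (D k) + (n : ℝ≥0∞) * ENNReal.ofReal δ := by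
            gcongr
            exact_mod_cast (Finset.mem_range.mp hk).le
    have hsum : (n : ℝ≥0∞) * ENNReal.ofReal (ε / 2 - δ) ≤
        1 + (n : ℝ≥0∞) * ((n : ℝ≥0∞) * ENNReal.ofReal δ) := by
      calc (n : ℝ≥0∞) * ENNReal.ofReal (ε / 2 - δ)
          = ∑ _k ∈ Finset.range n, ENNReal.ofReal (ε / 2 - δ) := by
            rw [Finset.sum_const, Finset.card_range, nsmul_eq_mul]
        _ ≤ ∑ k ∈ Finset.range n, μ (T k) := Finset.sum_le_sum (fun k _ => hLow k)
        _ ≤ ∑ k ∈ Finset.range n, (μ (D k) + (n : ℝ≥0∞) * ENNReal.ofReal δ) :=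
            Finset.sum_le_sum hTD
        _ = (∑ k ∈ Finset.range n, μ (D k)) + (n : ℝ≥0∞) * ((n : ℝ≥0∞) * ENNReal.ofReal δ) := by
            rw [Finset.sum_add_distrib, Finset.sum_const, Finset.card_range, nsmul_eq_mul,
              ← mul_assoc]
        _ = μ (⋃ k ∈ Finset.range n, D k) + (n : ℝ≥0∞) * ((n : ℝ≥0∞) * ENNReal.ofReal δ) := by
            rw [measure_biUnion_finset hDdisj (fun k _ => hDmeas k)]
        _ ≤ 1 + (n : ℝ≥0∞) * ((n : ℝ≥0∞) * ENNReal.ofReal δ) :=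
            add_le_add_left prob_le_one _
    -- to reals
    have hsum' : (n : ℝ) * (ε / 2 - δ) ≤ 1 + (n : ℝ) * ((n : ℝ) * δ) := by
      have hcast : ((n : ℝ≥0∞)) = ENNReal.ofReal (n : ℝ) := (ENNReal.ofReal_natCast n).symm
      rw [hcast, ← ENNReal.ofReal_mul (Nat.cast_nonneg n),
        ← ENNReal.ofReal_mul (Nat.cast_nonneg n),
        ← ENNReal.ofReal_mul (Nat.cast_nonneg n),
        ← ENNReal.ofReal_one, ← ENNReal.ofReal_add (by norm_num) (by positivity)] at hsum
      exact (ENNReal.ofReal_le_ofReal_iff (by positivity)).mp hsum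
    have hne : (4 : ℝ) ≤ (n : ℝ) * ε := by
      have h1 : 4 / ε ≤ ((⌈4 / ε⌉₊ : ℕ) : ℝ) := Nat.le_ceil _
      have h2 : ((⌈4 / ε⌉₊ : ℕ) : ℝ) ≤ (n : ℝ) := by
        rw [hn]; push_cast; linarith
      have : 4 / ε ≤ (n : ℝ) := h1.trans h2
      calc (4 : ℝ) = (4 / ε) * ε := by field_simp
        _ ≤ (n : ℝ) * ε := by nlinarith
    have hnn : (n : ℝ) * ((n : ℝ) + 1) * δ ≤ 1 / 2 := by
      have hpos : (0 : ℝ) < 2 * (n : ℝ) * ((n : ℝ) + 1) := by positivity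
      calc (n : ℝ) * ((n : ℝ) + 1) * δ ≤ (n : ℝ) * ((n : ℝ) + 1) * (1 / (2 * (n : ℝ) * ((n : ℝ) + 1))) := by
            apply mul_le_mul_of_nonneg_left hδn (by positivity)
        _ = 1 / 2 := by field_simp
    nlinarith [hsum', hne, hnn, hnpos, hδpos]
  -- assembly
  haveI : IsProbabilityMeasure π.toMeasure :=
    ⟨by rw [π.toMeasure_apply]; exact π.m_univ⟩
  set S : Set Hε := {h' : Hε | ENNReal.ofReal (ε / 2) <
      ⨅ h : H, μ {x | (h : X → Bool) x ≠ (h' : X → Bool) x}} with hS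
  have hCsub : Sᶜ ⊆ ⋃ h ∈ H,
      {h' : Hε | μ {x | h x ≠ (h' : X → Bool) x} ≤ ENNReal.ofReal (ε / 2 + δ)} := by
    intro h' hh'
    simp only [hS, Set.mem_compl_iff, Set.mem_setOf_eq, not_lt] at hh'
    have hlt : (⨅ h : H, μ {x | (h : X → Bool) x ≠ (h' : X → Bool) x}) <
        ENNReal.ofReal (ε / 2 + δ) :=
      lt_of_le_of_lt hh' (by
        rw [ENNReal.ofReal_lt_ofReal_iff (by linarith)]; linarith)
    obtain ⟨⟨g, hg⟩, hglt⟩ := iInf_lt_iff.mp hlt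
    exact Set.mem_biUnion hg hglt.le
  have hUcnt : (⋃ h ∈ H,
      {h' : Hε | μ {x | h x ≠ (h' : X → Bool) x} ≤ ENNReal.ofReal (ε / 2 + δ)}).Countable :=
    hHcnt.biUnion (fun g hg => (hBfin g (hHm g hg)).countable)
  haveI : NullSingletonClass π.toMeasure := ⟨fun y => by rw [π.toMeasure_apply]; exact hπ y⟩
  have hC0 : π.toMeasure Sᶜ = 0 :=
    le_antisymm ((measure_mono hCsub).trans (hUcnt.measure_zero _).le) (zero_le)
  have hkey := @measure_add_measure_compl _ ⊤ π.toMeasure Sᶜ MeasurableSpace.measurableSet_top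
  rw [compl_compl, hC0, zero_add, π.toMeasure_apply Set.univ, π.m_univ] at hkey
  rw [← π.toMeasure_apply]
  exact hkey
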